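/- Let B = B(x_B, r_B) ⊂ ℝ^n and let g be locally integrable on ℝ^n. Then for every x ∈ B, ∫_{(4B)^c} |x−y|^{−(n+2)} |g(y) − g_{4B}| dy ≤ C(n) · r_B^{−2} · ∑_{m=1}^{∞} 4^{−2m} |4^{m+1}B|⁻¹ ∫_{4^{m+1}B} |g(z) − g_{4^{m+1}B}| dz, provided the right-hand side is finite. -/

import Mathlib

open MeasureTheory Set Metric
open scoped ENNReal NNReal

-- volume of balls in EuclideanSpace
lemma aux_vol (n : ℕ) (x : EuclideanSpace ℝ (Fin n)) {R : ℝ} (hR : 0 < R) :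
    volume (ball x R) = ENNReal.ofReal (R ^ n) * volume (ball (0 : EuclideanSpace ℝ (Fin n)) 1) := by
  rcases Nat.eq_zero_or_pos n with hn | hn
  · subst hn
    have hsub : Subsingleton (EuclideanSpace ℝ (Fin 0)) := by
      infer_instance
    have h1 : ball x R = univ := eq_univ_of_forall fun y => by
      simp [mem_ball, Subsingleton.elim y x, hR]
    have h2 : ball (0 : EuclideanSpace ℝ (Fin 0)) 1 = univ := eq_univ_of_forall fun y => by
      simp [mem_ball, Subsingleton.elim y (0 : EuclideanSpace ℝ (Fin 0))]
    simp [h1, h2]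
  · haveI : Nontrivial (EuclideanSpace ℝ (Fin n)) := by
      have : 1 ≤ n := hn
      exact ⟨⟨EuclideanSpace.single ⟨0, hn⟩ 1, 0, by
        intro h
        have := congrArg (fun v : EuclideanSpace ℝ (Fin n) => v ⟨0, hn⟩) h
        simp [EuclideanSpace.single] at this⟩⟩
    rw [Measure.addHaar_ball _ _ hR.le, finrank_euclideanSpace_fin]

lemma aux_int (n : ℕ) (g : EuclideanSpace ℝ (Fin n) → ℝ)
    (hg : LocallyIntegrable g volume) (x₀ : EuclideanSpace ℝ (Fin n)) (R : ℝ) :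
    IntegrableOn g (ball x₀ R) volume :=
  (hg.integrableOn_isCompact (isCompact_closedBall x₀ R)).mono_set ball_subset_closedBall

lemma aux_tail (k : ℕ) :
    (∑' m : ℕ, if k ≤ m then ((16:ℝ≥0∞))⁻¹ ^ m else 0) ≤ 2 * (16:ℝ≥0∞)⁻¹ ^ k := by
  have hinj : Function.Injective (fun i : ℕ => i + k) := fun a b h => by
    simpa using h
  have hsupp : Function.support (fun m : ℕ => if k ≤ m then ((16:ℝ≥0∞))⁻¹ ^ m else 0)
      ⊆ Set.range (fun i : ℕ => i + k) := by
    intro m hm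
    by_cases h : k ≤ m
    · exact ⟨m - k, by simp; omega⟩
    · simp [h] at hm
  rw [← Function.Injective.tsum_eq hinj hsupp]
  have heq : ∀ i : ℕ, (if k ≤ i + k then ((16:ℝ≥0∞))⁻¹ ^ (i + k) else 0)
      = (16:ℝ≥0∞)⁻¹ ^ k * (16:ℝ≥0∞)⁻¹ ^ i := by
    intro i
    rw [if_pos (by omega), pow_add]
    ring
  rw [tsum_congr heq, ENNReal.tsum_mul_left, ENNReal.tsum_geometric, mul_comm]
  gcongr
  have h2 : (2:ℝ≥0∞)⁻¹ ≤ 1 - 16⁻¹ := by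
    refine ENNReal.le_sub_of_add_le_right (by norm_num) ?_
    rw [show (2:ℝ≥0∞) = ((2:ℝ≥0):ℝ≥0∞) by norm_num, show (16:ℝ≥0∞) = ((16:ℝ≥0):ℝ≥0∞) by norm_num,
      ← ENNReal.coe_inv (by norm_num), ← ENNReal.coe_inv (by norm_num), ← ENNReal.coe_add,
      ← ENNReal.coe_one, ENNReal.coe_le_coe, ← NNReal.coe_le_coe]
    push_cast
    norm_num
  calc ((1:ℝ≥0∞) - 16⁻¹)⁻¹ ≤ ((2:ℝ≥0∞)⁻¹)⁻¹ := by
        exact ENNReal.inv_le_inv.2 h2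
    _ = 2 := inv_inv 2

lemma aux_swap (e : ℕ → ℝ≥0∞) :
    ∑' m : ℕ, (16:ℝ≥0∞)⁻¹ ^ m * ∑ k ∈ Finset.range (m+1), e k
      ≤ 2 * ∑' k : ℕ, (16:ℝ≥0∞)⁻¹ ^ k * e k := by
  have h1 : ∀ m : ℕ, (16:ℝ≥0∞)⁻¹ ^ m * ∑ k ∈ Finset.range (m+1), e k
      = ∑' k : ℕ, if k ≤ m then (16:ℝ≥0∞)⁻¹ ^ m * e k else 0 := by
    intro m
    rw [Finset.mul_sum]
    rw [tsum_eq_sum (s := Finset.range (m+1))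
      (f := fun k => if k ≤ m then (16:ℝ≥0∞)⁻¹ ^ m * e k else 0)
      (fun k hk => by rw [if_neg (by simpa [Nat.lt_succ_iff] using hk)])]
    exact Finset.sum_congr rfl fun k hk => by
      rw [if_pos (by simpa [Nat.lt_succ_iff] using Finset.mem_range.1 hk)]
  calc ∑' m : ℕ, (16:ℝ≥0∞)⁻¹ ^ m * ∑ k ∈ Finset.range (m+1), e k
      = ∑' m : ℕ, ∑' k : ℕ, (if k ≤ m then (16:ℝ≥0∞)⁻¹ ^ m * e k else 0) := tsum_congr h1
    _ = ∑' k : ℕ, ∑' m : ℕ, (if k ≤ m then (16:ℝ≥0∞)⁻¹ ^ m * e k else 0) := ENNReal.tsum_comm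
    _ = ∑' k : ℕ, (∑' m : ℕ, if k ≤ m then (16:ℝ≥0∞)⁻¹ ^ m else 0) * e k := by
        refine tsum_congr fun k => ?_
        rw [← ENNReal.tsum_mul_right]
        exact tsum_congr fun m => by by_cases h : k ≤ m <;> simp [h]
    _ ≤ ∑' k : ℕ, (2 * (16:ℝ≥0∞)⁻¹ ^ k) * e k :=
        ENNReal.tsum_le_tsum fun k => mul_le_mul_left (aux_tail k) _
    _ = 2 * ∑' k : ℕ, (16:ℝ≥0∞)⁻¹ ^ k * e k := by
        rw [← ENNReal.tsum_mul_left]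
        exact tsum_congr fun k => by ring

lemma aux_intabs (n : ℕ) (g : EuclideanSpace ℝ (Fin n) → ℝ) (hg : LocallyIntegrable g volume)
    (x₀ : EuclideanSpace ℝ (Fin n)) (R : ℝ) (c : ℝ) :
    IntegrableOn (fun y => |g y - c|) (ball x₀ R) volume :=
  ((aux_int n g hg x₀ R).sub (integrableOn_const measure_ball_lt_top.ne)).abs

lemma aux_avg_nonneg {α : Type*} [MeasurableSpace α] (μ : Measure α) (s : Set α) (f : α → ℝ) :
    0 ≤ ⨍ z in s, |f z| ∂μ := by
  rw [setAverage_eq]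
  have h : 0 ≤ ∫ z in s, |f z| ∂μ := integral_nonneg fun z => abs_nonneg _
  positivity

lemma aux_integral_eq (n : ℕ) (g : EuclideanSpace ℝ (Fin n) → ℝ)
    (x₀ : EuclideanSpace ℝ (Fin n)) {R : ℝ} (hR : 0 < R) (c : ℝ) :
    ∫ z in ball x₀ R, |g z - c| =
      (volume (ball x₀ R)).toReal * ⨍ z in ball x₀ R, |g z - c| := by
  rw [setAverage_eq, smul_eq_mul, ← mul_assoc, ← measureReal_def, mul_inv_cancel₀, one_mul]
  exact ENNReal.toReal_ne_zero.2 ⟨(measure_ball_pos _ _ hR).ne', measure_ball_lt_top.ne⟩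

lemma aux_volstep (n : ℕ) (x₀ : EuclideanSpace ℝ (Fin n)) {r : ℝ} (hr : 0 < r) (k : ℕ) :
    (volume (ball x₀ ((4:ℝ)^(k+1) * r))).toReal
      = 4^n * (volume (ball x₀ ((4:ℝ)^k * r))).toReal := by
  have h1 : (0:ℝ) < (4:ℝ)^k * r := by positivity
  have h2 : (0:ℝ) < (4:ℝ)^(k+1) * r := by positivity
  rw [aux_vol n x₀ h2, aux_vol n x₀ h1]
  rw [ENNReal.toReal_mul, ENNReal.toReal_mul, ENNReal.toReal_ofReal (by positivity),
    ENNReal.toReal_ofReal (by positivity)]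
  rw [show (4:ℝ)^(k+1) * r = 4 * ((4:ℝ)^k * r) by ring, mul_pow]
  ring

lemma aux_step (n : ℕ) (x₀ : EuclideanSpace ℝ (Fin n)) {r : ℝ} (hr : 0 < r)
    (g : EuclideanSpace ℝ (Fin n) → ℝ) (hg : LocallyIntegrable g volume) (k : ℕ) :
    |(⨍ w in ball x₀ ((4:ℝ)^k * r), g w) - ⨍ w in ball x₀ ((4:ℝ)^(k+1) * r), g w|
      ≤ 4^n * ⨍ z in ball x₀ ((4:ℝ)^(k+1) * r),
          |g z - ⨍ w in ball x₀ ((4:ℝ)^(k+1) * r), g w| := by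
  set c1 : ℝ := ⨍ w in ball x₀ ((4:ℝ)^(k+1) * r), g w with hc1
  have hrk : (0:ℝ) < (4:ℝ)^k * r := by positivity
  have hrk1 : (0:ℝ) < (4:ℝ)^(k+1) * r := by positivity
  have ht0 : (volume (ball x₀ ((4:ℝ)^k * r))).toReal ≠ 0 :=
    ENNReal.toReal_ne_zero.2 ⟨(measure_ball_pos _ _ hrk).ne', measure_ball_lt_top.ne⟩
  have htnn : (0:ℝ) ≤ (volume (ball x₀ ((4:ℝ)^k * r))).toReal := ENNReal.toReal_nonneg
  have hsub : ball x₀ ((4:ℝ)^k * r) ⊆ ball x₀ ((4:ℝ)^(k+1) * r) :=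
    ball_subset_ball (mul_le_mul_of_nonneg_right (pow_le_pow_right₀ (by norm_num) (Nat.le_succ k)) hr.le)
  have heq : (⨍ w in ball x₀ ((4:ℝ)^k * r), g w) - c1
      = ⨍ w in ball x₀ ((4:ℝ)^k * r), (g w - c1) := by
    rw [setAverage_eq, setAverage_eq, integral_sub (aux_int n g hg x₀ _)
      (integrableOn_const measure_ball_lt_top.ne), setIntegral_const,
      smul_eq_mul, smul_eq_mul, smul_eq_mul, mul_sub, ← mul_assoc,
      measureReal_def, inv_mul_cancel₀ ht0, one_mul]
  rw [heq]
  have habs : |⨍ w in ball x₀ ((4:ℝ)^k * r), (g w - c1)|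
      ≤ (volume (ball x₀ ((4:ℝ)^k * r))).toReal⁻¹ * ∫ w in ball x₀ ((4:ℝ)^k * r), |g w - c1| := by
    rw [setAverage_eq, smul_eq_mul, abs_mul, abs_inv, measureReal_def, ENNReal.abs_toReal]
    gcongr
    calc |∫ w in ball x₀ ((4:ℝ)^k * r), (g w - c1)|
        = ‖∫ w in ball x₀ ((4:ℝ)^k * r), (g w - c1)‖ := (Real.norm_eq_abs _).symm
      _ ≤ ∫ w in ball x₀ ((4:ℝ)^k * r), ‖g w - c1‖ := norm_integral_le_integral_norm _
      _ = ∫ w in ball x₀ ((4:ℝ)^k * r), |g w - c1| := by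
          simp [Real.norm_eq_abs]
  refine habs.trans ?_
  have hmono : ∫ w in ball x₀ ((4:ℝ)^k * r), |g w - c1|
      ≤ ∫ w in ball x₀ ((4:ℝ)^(k+1) * r), |g w - c1| :=
    setIntegral_mono_set (aux_intabs n g hg x₀ _ c1)
      (Filter.Eventually.of_forall (fun z => abs_nonneg _)) (HasSubset.Subset.eventuallyLE hsub)
  calc (volume (ball x₀ ((4:ℝ)^k * r))).toReal⁻¹ * ∫ w in ball x₀ ((4:ℝ)^k * r), |g w - c1|
      ≤ (volume (ball x₀ ((4:ℝ)^k * r))).toReal⁻¹ * ∫ w in ball x₀ ((4:ℝ)^(k+1) * r), |g w - c1| := by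
        gcongr
    _ = 4^n * ⨍ z in ball x₀ ((4:ℝ)^(k+1) * r), |g z - c1| := by
        rw [aux_integral_eq n g x₀ hrk1, aux_volstep n x₀ hr k]
        field_simp

lemma aux_tele (n : ℕ) (x₀ : EuclideanSpace ℝ (Fin n)) {r : ℝ} (hr : 0 < r)
    (g : EuclideanSpace ℝ (Fin n) → ℝ) (hg : LocallyIntegrable g volume) (m : ℕ) :
    |(⨍ w in ball x₀ ((4:ℝ)^1 * r), g w) - ⨍ w in ball x₀ ((4:ℝ)^(m+2) * r), g w|
      ≤ 4^n * ∑ k ∈ Finset.range (m+1),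
          ⨍ z in ball x₀ ((4:ℝ)^(k+2) * r), |g z - ⨍ w in ball x₀ ((4:ℝ)^(k+2) * r), g w| := by
  induction m with
  | zero => simpa using aux_step n x₀ hr g hg 1
  | succ m ih =>
      have h2 := aux_step n x₀ hr g hg (m+2)
      calc |(⨍ w in ball x₀ ((4:ℝ)^1 * r), g w) - ⨍ w in ball x₀ ((4:ℝ)^(m+3) * r), g w|
          ≤ |(⨍ w in ball x₀ ((4:ℝ)^1 * r), g w) - ⨍ w in ball x₀ ((4:ℝ)^(m+2) * r), g w|
            + |(⨍ w in ball x₀ ((4:ℝ)^(m+2) * r), g w) - ⨍ w in ball x₀ ((4:ℝ)^(m+3) * r), g w| :=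
            abs_sub_le _ _ _
        _ ≤ 4^n * (∑ k ∈ Finset.range (m+1),
              ⨍ z in ball x₀ ((4:ℝ)^(k+2) * r), |g z - ⨍ w in ball x₀ ((4:ℝ)^(k+2) * r), g w|)
            + 4^n * ⨍ z in ball x₀ ((4:ℝ)^(m+3) * r),
                |g z - ⨍ w in ball x₀ ((4:ℝ)^(m+3) * r), g w| := by
            exact add_le_add ih h2
        _ = 4^n * ∑ k ∈ Finset.range (m+2),
              ⨍ z in ball x₀ ((4:ℝ)^(k+2) * r), |g z - ⨍ w in ball x₀ ((4:ℝ)^(k+2) * r), g w| := by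
            conv_rhs => rw [Finset.sum_range_succ]
            ring

lemma aux_pow (n m : ℕ) {r : ℝ} (hr : 0 < r) :
    ((4:ℝ)^m * r)^(-((n:ℝ)+2)) * ((4:ℝ)^(m+2) * r)^n
      = 4^(2*n) * ((16:ℝ)⁻¹)^m * r^(-(2:ℝ)) := by
  have h4 : (0:ℝ) < 4 := by norm_num
  have h4m : (0:ℝ) < (4:ℝ)^m := by positivity
  rw [Real.mul_rpow h4m.le hr.le, mul_pow]
  rw [show ((4:ℝ)^(m+2))^n = (4:ℝ)^((m+2)*n) by rw [← pow_mul]]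
  rw [← Real.rpow_natCast (4:ℝ) m, ← Real.rpow_natCast (4:ℝ) ((m+2)*n),
    ← Real.rpow_natCast r n, ← Real.rpow_mul h4.le]
  have e1 : ((4:ℝ)^((m:ℝ) * (-((n:ℝ)+2))) * r^(-((n:ℝ)+2))) * ((4:ℝ)^((((m+2)*n : ℕ)):ℝ) * r^((n:ℝ)))
      = ((4:ℝ)^((m:ℝ) * (-((n:ℝ)+2))) * (4:ℝ)^((((m+2)*n : ℕ)):ℝ)) * (r^(-((n:ℝ)+2)) * r^((n:ℝ))) := by
    ring
  rw [e1, ← Real.rpow_add h4, ← Real.rpow_add hr]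
  have e2 : (m:ℝ) * (-((n:ℝ)+2)) + (((m+2)*n : ℕ):ℝ) = 2*(n:ℝ) + (-2:ℝ)*(m:ℝ) := by
    push_cast
    ring
  have e3 : -((n:ℝ)+2) + (n:ℝ) = -(2:ℝ) := by ring
  rw [e2, e3, Real.rpow_add h4, Real.rpow_mul h4.le, Real.rpow_natCast]
  congr 2
  · rw [show ((4:ℝ)^(2:ℝ)) = (4:ℝ)^(2:ℕ) by rw [show (2:ℝ) = ((2:ℕ):ℝ) by norm_num, Real.rpow_natCast], ← pow_mul]
  · rw [show ((-2:ℝ) * (m:ℝ)) = (((-2 * m : ℤ)):ℝ) by push_cast; ring, Real.rpow_intCast,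
      show ((-2) * (m:ℤ)) = (-2:ℤ) * (m:ℤ) by rfl, zpow_mul,
      show ((4:ℝ)^(-2:ℤ)) = 16⁻¹ by norm_num, zpow_natCast]

lemma aux_cover (n : ℕ) (x₀ : EuclideanSpace ℝ (Fin n)) {r : ℝ} (hr : 0 < r) :
    (ball x₀ ((4:ℝ)^(1:ℕ)*r))ᶜ ⊆ ⋃ m : ℕ, (ball x₀ ((4:ℝ)^(m+2)*r) \ ball x₀ ((4:ℝ)^(m+1)*r)) := by
  intro y hy
  rw [mem_compl_iff, mem_ball, not_lt, pow_one] at hy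
  have hex : ∃ m : ℕ, dist y x₀ < (4:ℝ)^(m+2)*r := by
    obtain ⟨N, hN⟩ := pow_unbounded_of_one_lt (dist y x₀ / r) (by norm_num : (1:ℝ) < 4)
    refine ⟨N, ?_⟩
    have h1 : dist y x₀ < 4^N * r := by
      rw [div_lt_iff₀ hr] at hN
      linarith
    have h2 : (4:ℝ)^N * r ≤ 4^(N+2)*r := by
      have := pow_le_pow_right₀ (by norm_num : (1:ℝ) ≤ 4) (by omega : N ≤ N + 2)
      nlinarith
    linarith
  set m := Nat.find hex with hm
  have hup : dist y x₀ < (4:ℝ)^(m+2)*r := Nat.find_spec hex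
  have hlow : (4:ℝ)^(m+1)*r ≤ dist y x₀ := by
    rcases Nat.eq_zero_or_pos m with h0 | h0
    · rw [h0]
      norm_num
      linarith
    · have := Nat.find_min hex (show m - 1 < m by omega)
      rw [not_lt] at this
      have : (4:ℝ)^(m+1) * r ≤ (4:ℝ)^(m-1+2)*r := by
        rw [show m-1+2 = m+1 by omega]
      linarith [this]
  exact mem_iUnion.2 ⟨m, by simp [mem_ball, hup, not_lt.2 hlow]⟩

lemma aux_annulus (n : ℕ) (x₀ : EuclideanSpace ℝ (Fin n)) {r : ℝ} (hr : 0 < r)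
    (g : EuclideanSpace ℝ (Fin n) → ℝ) (c₁ : ℝ)
    (x : EuclideanSpace ℝ (Fin n)) (hx : x ∈ ball x₀ r) (m : ℕ) :
    (∫⁻ y in (ball x₀ ((4:ℝ)^(m+2)*r) \ ball x₀ ((4:ℝ)^(m+1)*r)),
        ENNReal.ofReal (‖x - y‖^(-((n:ℝ)+2)) * |g y - c₁|))
      ≤ ENNReal.ofReal (((4:ℝ)^m * r)^(-((n:ℝ)+2))) *
          ∫⁻ y in ball x₀ ((4:ℝ)^(m+2)*r), ENNReal.ofReal |g y - c₁| := by
  have hmeas : MeasurableSet (ball x₀ ((4:ℝ)^(m+2)*r) \ ball x₀ ((4:ℝ)^(m+1)*r)) :=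
    measurableSet_ball.diff measurableSet_ball
  have hpt : ∀ y ∈ (ball x₀ ((4:ℝ)^(m+2)*r) \ ball x₀ ((4:ℝ)^(m+1)*r)),
      ENNReal.ofReal (‖x - y‖^(-((n:ℝ)+2)) * |g y - c₁|)
        ≤ ENNReal.ofReal (((4:ℝ)^m * r)^(-((n:ℝ)+2))) * ENNReal.ofReal |g y - c₁| := by
    intro y hy
    have hd : (4:ℝ)^m * r ≤ ‖x - y‖ := by
      have h1 : (4:ℝ)^(m+1)*r ≤ dist y x₀ := not_lt.1 (by simpa [mem_ball] using hy.2)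
      have h2 : dist x x₀ < r := mem_ball.1 hx
      have h3 : dist y x₀ ≤ dist y x + dist x x₀ := dist_triangle y x x₀
      have h4 : (1:ℝ) ≤ (4:ℝ)^m := one_le_pow₀ (by norm_num)
      have h5 : ‖x - y‖ = dist y x := by
        rw [dist_comm, dist_eq_norm]
      rw [h5]
      have : (4:ℝ)^(m+1) = 4 * 4^m := by ring
      nlinarith
    have hb : ‖x - y‖^(-((n:ℝ)+2)) ≤ ((4:ℝ)^m * r)^(-((n:ℝ)+2)) :=
      Real.rpow_le_rpow_of_nonpos (by positivity) hd (by have := Nat.cast_nonneg (α := ℝ) n; linarith)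
    rw [ENNReal.ofReal_mul (Real.rpow_nonneg (norm_nonneg _) _)]
    exact mul_le_mul_left (ENNReal.ofReal_le_ofReal hb) _
  calc (∫⁻ y in (ball x₀ ((4:ℝ)^(m+2)*r) \ ball x₀ ((4:ℝ)^(m+1)*r)),
        ENNReal.ofReal (‖x - y‖^(-((n:ℝ)+2)) * |g y - c₁|))
      ≤ ∫⁻ y in (ball x₀ ((4:ℝ)^(m+2)*r) \ ball x₀ ((4:ℝ)^(m+1)*r)),
          ENNReal.ofReal (((4:ℝ)^m * r)^(-((n:ℝ)+2))) * ENNReal.ofReal |g y - c₁| :=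
        lintegral_mono_ae (ae_restrict_of_forall_mem hmeas hpt)
    _ = ENNReal.ofReal (((4:ℝ)^m * r)^(-((n:ℝ)+2))) *
          ∫⁻ y in (ball x₀ ((4:ℝ)^(m+2)*r) \ ball x₀ ((4:ℝ)^(m+1)*r)),
            ENNReal.ofReal |g y - c₁| :=
        lintegral_const_mul' _ _ ENNReal.ofReal_ne_top
    _ ≤ ENNReal.ofReal (((4:ℝ)^m * r)^(-((n:ℝ)+2))) *
          ∫⁻ y in ball x₀ ((4:ℝ)^(m+2)*r), ENNReal.ofReal |g y - c₁| :=
        mul_le_mul_right (lintegral_mono_set diff_subset) _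

lemma aux_L5 (n : ℕ) (x₀ : EuclideanSpace ℝ (Fin n)) {r : ℝ} (hr : 0 < r)
    (g : EuclideanSpace ℝ (Fin n) → ℝ) (hg : LocallyIntegrable g volume) (m : ℕ) :
    (∫⁻ y in ball x₀ ((4:ℝ)^(m+2)*r),
        ENNReal.ofReal |g y - ⨍ w in ball x₀ ((4:ℝ)^1 * r), g w|)
      ≤ volume (ball x₀ ((4:ℝ)^(m+2)*r)) *
          ENNReal.ofReal
            ((⨍ z in ball x₀ ((4:ℝ)^(m+2)*r), |g z - ⨍ w in ball x₀ ((4:ℝ)^(m+2)*r), g w|)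
              + 4^n * ∑ k ∈ Finset.range (m+1),
                  ⨍ z in ball x₀ ((4:ℝ)^(k+2)*r), |g z - ⨍ w in ball x₀ ((4:ℝ)^(k+2)*r), g w|) := by
  set c1 : ℝ := ⨍ w in ball x₀ ((4:ℝ)^1 * r), g w with hc1
  set cm : ℝ := ⨍ w in ball x₀ ((4:ℝ)^(m+2) * r), g w with hcm
  set Em : ℝ := ⨍ z in ball x₀ ((4:ℝ)^(m+2)*r), |g z - cm| with hEm
  set T : ℝ := ∑ k ∈ Finset.range (m+1),
      ⨍ z in ball x₀ ((4:ℝ)^(k+2)*r), |g z - ⨍ w in ball x₀ ((4:ℝ)^(k+2)*r), g w| with hT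
  have hrm : (0:ℝ) < (4:ℝ)^(m+2)*r := by positivity
  have hTnn : 0 ≤ T := Finset.sum_nonneg fun k _ => aux_avg_nonneg _ _ _
  have hEnn : 0 ≤ Em := aux_avg_nonneg _ _ _
  have htele : |cm - c1| ≤ 4^n * T := by
    rw [abs_sub_comm]
    exact aux_tele n x₀ hr g hg m
  have hpt : ∀ y, ENNReal.ofReal |g y - c1|
      ≤ ENNReal.ofReal |g y - cm| + ENNReal.ofReal |cm - c1| := by
    intro y
    rw [← ENNReal.ofReal_add (abs_nonneg _) (abs_nonneg _)]
    exact ENNReal.ofReal_le_ofReal (abs_sub_le _ _ _)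
  calc (∫⁻ y in ball x₀ ((4:ℝ)^(m+2)*r), ENNReal.ofReal |g y - c1|)
      ≤ ∫⁻ y in ball x₀ ((4:ℝ)^(m+2)*r),
          (ENNReal.ofReal |g y - cm| + ENNReal.ofReal |cm - c1|) :=
        lintegral_mono hpt
    _ = (∫⁻ y in ball x₀ ((4:ℝ)^(m+2)*r), ENNReal.ofReal |g y - cm|)
        + volume (ball x₀ ((4:ℝ)^(m+2)*r)) * ENNReal.ofReal |cm - c1| := by
        rw [lintegral_add_right _ measurable_const, setLIntegral_const,
          mul_comm (ENNReal.ofReal |cm - c1|)]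
    _ ≤ volume (ball x₀ ((4:ℝ)^(m+2)*r)) * ENNReal.ofReal Em
        + volume (ball x₀ ((4:ℝ)^(m+2)*r)) * ENNReal.ofReal (4^n * T) := by
        have heq1 : (∫⁻ y in ball x₀ ((4:ℝ)^(m+2)*r), ENNReal.ofReal |g y - cm|)
            = volume (ball x₀ ((4:ℝ)^(m+2)*r)) * ENNReal.ofReal Em := by
          rw [← ofReal_integral_eq_lintegral_ofReal (aux_intabs n g hg x₀ _ cm)
            (Filter.Eventually.of_forall fun y => abs_nonneg _),
            aux_integral_eq n g x₀ hrm cm,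
            ENNReal.ofReal_mul ENNReal.toReal_nonneg,
            ENNReal.ofReal_toReal measure_ball_lt_top.ne]
        exact add_le_add heq1.le (mul_le_mul_right (ENNReal.ofReal_le_ofReal htele) _)
    _ = volume (ball x₀ ((4:ℝ)^(m+2)*r)) * (ENNReal.ofReal Em + ENNReal.ofReal (4^n * T)) := by
        rw [mul_add]
    _ = volume (ball x₀ ((4:ℝ)^(m+2)*r)) * ENNReal.ofReal (Em + 4^n * T) := by
        rw [ENNReal.ofReal_add hEnn (mul_nonneg (by positivity) hTnn)]


lemma aux_coef (m : ℕ) : (4:ℝ)^(-(2:ℝ)*((m:ℝ)+1)) = ((16:ℝ)⁻¹)^(m+1) := by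
  rw [show (-(2:ℝ)*((m:ℝ)+1)) = (((-2 * (m+1) : ℤ)):ℝ) by push_cast; ring, Real.rpow_intCast,
    show ((-2 * ((m:ℤ)+1))) = (-2:ℤ) * ((m:ℤ)+1) from rfl, zpow_mul,
    show ((4:ℝ)^(-2:ℤ)) = 16⁻¹ by norm_num,
    show ((m:ℤ)+1) = ((m+1 : ℕ):ℤ) by push_cast; ring, zpow_natCast]

lemma aux_ofReal16 (j : ℕ) : ENNReal.ofReal (((16:ℝ)⁻¹)^j) = ((16:ℝ≥0∞)⁻¹)^j := by
  rw [ENNReal.ofReal_pow (by norm_num), ENNReal.ofReal_inv_of_pos (by norm_num)]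
  norm_num

lemma aux_key (n : ℕ) (x₀ : EuclideanSpace ℝ (Fin n)) {r : ℝ} (hr : 0 < r) (m : ℕ) :
    ENNReal.ofReal (((4:ℝ)^m * r)^(-((n:ℝ)+2))) * volume (ball x₀ ((4:ℝ)^(m+2)*r))
      = ENNReal.ofReal ((4:ℝ)^(2*n) * (volume (ball (0:EuclideanSpace ℝ (Fin n)) 1)).toReal
          * r^(-(2:ℝ))) * ((16:ℝ≥0∞)⁻¹)^m := by
  have h1 : (0:ℝ) < (4:ℝ)^(m+2)*r := by positivity
  have hne : volume (ball (0:EuclideanSpace ℝ (Fin n)) 1) ≠ ⊤ := measure_ball_lt_top.ne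
  have hvnn : (0:ℝ) ≤ (volume (ball (0:EuclideanSpace ℝ (Fin n)) 1)).toReal :=
    ENNReal.toReal_nonneg
  rw [aux_vol n x₀ h1, ← mul_assoc,
    ← ENNReal.ofReal_mul (Real.rpow_nonneg (by positivity) _), aux_pow n m hr,
    ← ENNReal.ofReal_toReal hne,
    ← ENNReal.ofReal_mul (by positivity)]
  rw [show (4:ℝ)^(2*n) * ((16:ℝ)⁻¹)^m * r^(-(2:ℝ))
        * (volume (ball (0:EuclideanSpace ℝ (Fin n)) 1)).toReal
      = ((4:ℝ)^(2*n) * (volume (ball (0:EuclideanSpace ℝ (Fin n)) 1)).toReal * r^(-(2:ℝ)))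
        * ((16:ℝ)⁻¹)^m by ring]
  rw [ENNReal.ofReal_mul (by positivity), aux_ofReal16]
  rw [ENNReal.toReal_ofReal hvnn]

theorem stmt_2 (n : ℕ) :
    ∃ C > 0, ∀ (x₀ : EuclideanSpace ℝ (Fin n)) (r : ℝ), 0 < r →
      ∀ g : EuclideanSpace ℝ (Fin n) → ℝ, LocallyIntegrable g volume →
      Summable (fun m : ℕ => (4:ℝ)^(-(2:ℝ)*((m:ℝ)+1)) *
        ⨍ z in ball x₀ ((4:ℝ)^(m+2)*r),
          |g z - ⨍ w in ball x₀ ((4:ℝ)^(m+2)*r), g w|) →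
      ∀ x ∈ ball x₀ r,
      (∫⁻ y in (ball x₀ (4*r))ᶜ,
          ENNReal.ofReal (‖x - y‖^(-((n:ℝ)+2)) * |g y - ⨍ w in ball x₀ (4*r), g w|)) ≤
        ENNReal.ofReal (C * r^(-(2:ℝ)) *
          ∑' m : ℕ, (4:ℝ)^(-(2:ℝ)*((m:ℝ)+1)) *
            ⨍ z in ball x₀ ((4:ℝ)^(m+2)*r),
              |g z - ⨍ w in ball x₀ ((4:ℝ)^(m+2)*r), g w|) := by
  have hVpos : 0 < (volume (ball (0 : EuclideanSpace ℝ (Fin n)) 1)).toReal :=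
    ENNReal.toReal_pos (measure_ball_pos _ _ one_pos).ne' measure_ball_lt_top.ne
  refine ⟨(16 + 32*4^n) * 4^(2*n) * (volume (ball (0:EuclideanSpace ℝ (Fin n)) 1)).toReal,
    by positivity, ?_⟩
  intro x₀ r hr g hg hsum x hx
  rw [show (4:ℝ)*r = (4:ℝ)^(1:ℕ)*r by norm_num]
  set c1 : ℝ := ⨍ w in ball x₀ ((4:ℝ)^(1:ℕ)*r), g w with hc1
  -- abbreviations
  set v : ℝ := (volume (ball (0:EuclideanSpace ℝ (Fin n)) 1)).toReal with hv
  set K : ℝ≥0∞ := ENNReal.ofReal ((4:ℝ)^(2*n) * v * r^(-(2:ℝ))) with hK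
  have hEnn : ∀ j : ℕ, 0 ≤ ⨍ z in ball x₀ ((4:ℝ)^j*r), |g z - ⨍ w in ball x₀ ((4:ℝ)^j*r), g w| :=
    fun j => aux_avg_nonneg _ _ _
  -- the sum in ENNReal
  have hofS : ENNReal.ofReal (∑' m : ℕ, (4:ℝ)^(-(2:ℝ)*((m:ℝ)+1)) *
        ⨍ z in ball x₀ ((4:ℝ)^(m+2)*r), |g z - ⨍ w in ball x₀ ((4:ℝ)^(m+2)*r), g w|)
      = ∑' m : ℕ, ((16:ℝ≥0∞)⁻¹)^(m+1) *
          ENNReal.ofReal (⨍ z in ball x₀ ((4:ℝ)^(m+2)*r),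
            |g z - ⨍ w in ball x₀ ((4:ℝ)^(m+2)*r), g w|) := by
    rw [ENNReal.ofReal_tsum_of_nonneg
      (fun m => mul_nonneg (Real.rpow_nonneg (by norm_num) _) (hEnn (m+2))) hsum]
    refine tsum_congr fun m => ?_
    rw [ENNReal.ofReal_mul (Real.rpow_nonneg (by norm_num) _), aux_coef m, aux_ofReal16]
  set T : ℝ≥0∞ := ∑' k : ℕ, ((16:ℝ≥0∞)⁻¹)^k *
      ENNReal.ofReal (⨍ z in ball x₀ ((4:ℝ)^(k+2)*r),
        |g z - ⨍ w in ball x₀ ((4:ℝ)^(k+2)*r), g w|) with hT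
  have hT16 : T = 16 * ENNReal.ofReal (∑' m : ℕ, (4:ℝ)^(-(2:ℝ)*((m:ℝ)+1)) *
      ⨍ z in ball x₀ ((4:ℝ)^(m+2)*r), |g z - ⨍ w in ball x₀ ((4:ℝ)^(m+2)*r), g w|) := by
    rw [hofS]
    have : ∑' m : ℕ, ((16:ℝ≥0∞)⁻¹)^(m+1) *
        ENNReal.ofReal (⨍ z in ball x₀ ((4:ℝ)^(m+2)*r),
          |g z - ⨍ w in ball x₀ ((4:ℝ)^(m+2)*r), g w|)
        = (16:ℝ≥0∞)⁻¹ * T := by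
      rw [hT, ← ENNReal.tsum_mul_left]
      exact tsum_congr fun m => by rw [pow_succ']; ring
    rw [this, ← mul_assoc, ENNReal.mul_inv_cancel (by norm_num) (by norm_num), one_mul]
  -- the main estimate
  have hmain : (∫⁻ y in (ball x₀ ((4:ℝ)^(1:ℕ)*r))ᶜ,
        ENNReal.ofReal (‖x - y‖^(-((n:ℝ)+2)) * |g y - c1|))
      ≤ K * ((1 + 2*ENNReal.ofReal ((4:ℝ)^n)) * T) := by
    calc (∫⁻ y in (ball x₀ ((4:ℝ)^(1:ℕ)*r))ᶜ,
          ENNReal.ofReal (‖x - y‖^(-((n:ℝ)+2)) * |g y - c1|))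
        ≤ ∫⁻ y in ⋃ m : ℕ, (ball x₀ ((4:ℝ)^(m+2)*r) \ ball x₀ ((4:ℝ)^(m+1)*r)),
            ENNReal.ofReal (‖x - y‖^(-((n:ℝ)+2)) * |g y - c1|) :=
          lintegral_mono_set (aux_cover n x₀ hr)
      _ ≤ ∑' m : ℕ, ∫⁻ y in (ball x₀ ((4:ℝ)^(m+2)*r) \ ball x₀ ((4:ℝ)^(m+1)*r)),
            ENNReal.ofReal (‖x - y‖^(-((n:ℝ)+2)) * |g y - c1|) :=
          lintegral_iUnion_le _ _
      _ ≤ ∑' m : ℕ, ENNReal.ofReal (((4:ℝ)^m * r)^(-((n:ℝ)+2))) *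
            (volume (ball x₀ ((4:ℝ)^(m+2)*r)) *
              ENNReal.ofReal
                ((⨍ z in ball x₀ ((4:ℝ)^(m+2)*r), |g z - ⨍ w in ball x₀ ((4:ℝ)^(m+2)*r), g w|)
                  + 4^n * ∑ k ∈ Finset.range (m+1),
                      ⨍ z in ball x₀ ((4:ℝ)^(k+2)*r),
                        |g z - ⨍ w in ball x₀ ((4:ℝ)^(k+2)*r), g w|)) :=
          ENNReal.tsum_le_tsum fun m =>
            le_trans (aux_annulus n x₀ hr g c1 x hx m)
              (mul_le_mul_right (aux_L5 n x₀ hr g hg m) _)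
      _ = ∑' m : ℕ, (K * ((16:ℝ≥0∞)⁻¹)^m) *
            ENNReal.ofReal
                ((⨍ z in ball x₀ ((4:ℝ)^(m+2)*r), |g z - ⨍ w in ball x₀ ((4:ℝ)^(m+2)*r), g w|)
                  + 4^n * ∑ k ∈ Finset.range (m+1),
                      ⨍ z in ball x₀ ((4:ℝ)^(k+2)*r),
                        |g z - ⨍ w in ball x₀ ((4:ℝ)^(k+2)*r), g w|) := by
          refine tsum_congr fun m => ?_
          rw [← mul_assoc, aux_key n x₀ hr m]
      _ = K * ∑' m : ℕ, ((16:ℝ≥0∞)⁻¹)^m *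
            ENNReal.ofReal
                ((⨍ z in ball x₀ ((4:ℝ)^(m+2)*r), |g z - ⨍ w in ball x₀ ((4:ℝ)^(m+2)*r), g w|)
                  + 4^n * ∑ k ∈ Finset.range (m+1),
                      ⨍ z in ball x₀ ((4:ℝ)^(k+2)*r),
                        |g z - ⨍ w in ball x₀ ((4:ℝ)^(k+2)*r), g w|) := by
          rw [← ENNReal.tsum_mul_left]
          exact tsum_congr fun m => by ring
      _ ≤ K * ((1 + 2*ENNReal.ofReal ((4:ℝ)^n)) * T) := by
          refine mul_le_mul_right ?_ _
          have hsplit : ∀ m : ℕ, ENNReal.ofReal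
                ((⨍ z in ball x₀ ((4:ℝ)^(m+2)*r), |g z - ⨍ w in ball x₀ ((4:ℝ)^(m+2)*r), g w|)
                  + 4^n * ∑ k ∈ Finset.range (m+1),
                      ⨍ z in ball x₀ ((4:ℝ)^(k+2)*r),
                        |g z - ⨍ w in ball x₀ ((4:ℝ)^(k+2)*r), g w|)
              = ENNReal.ofReal (⨍ z in ball x₀ ((4:ℝ)^(m+2)*r),
                    |g z - ⨍ w in ball x₀ ((4:ℝ)^(m+2)*r), g w|)
                + ENNReal.ofReal ((4:ℝ)^n) *
                    ∑ k ∈ Finset.range (m+1),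
                      ENNReal.ofReal (⨍ z in ball x₀ ((4:ℝ)^(k+2)*r),
                        |g z - ⨍ w in ball x₀ ((4:ℝ)^(k+2)*r), g w|) := by
            intro m
            rw [ENNReal.ofReal_add (hEnn (m+2))
                (mul_nonneg (by positivity) (Finset.sum_nonneg fun k _ => hEnn (k+2))),
              ENNReal.ofReal_mul (by positivity),
              ENNReal.ofReal_sum_of_nonneg (fun k _ => hEnn (k+2))]
          calc ∑' m : ℕ, ((16:ℝ≥0∞)⁻¹)^m *
                ENNReal.ofReal
                  ((⨍ z in ball x₀ ((4:ℝ)^(m+2)*r), |g z - ⨍ w in ball x₀ ((4:ℝ)^(m+2)*r), g w|)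
                    + 4^n * ∑ k ∈ Finset.range (m+1),
                        ⨍ z in ball x₀ ((4:ℝ)^(k+2)*r),
                          |g z - ⨍ w in ball x₀ ((4:ℝ)^(k+2)*r), g w|)
              = ∑' m : ℕ, (((16:ℝ≥0∞)⁻¹)^m *
                  ENNReal.ofReal (⨍ z in ball x₀ ((4:ℝ)^(m+2)*r),
                    |g z - ⨍ w in ball x₀ ((4:ℝ)^(m+2)*r), g w|)
                + ENNReal.ofReal ((4:ℝ)^n) * (((16:ℝ≥0∞)⁻¹)^m *
                    ∑ k ∈ Finset.range (m+1),
                      ENNReal.ofReal (⨍ z in ball x₀ ((4:ℝ)^(k+2)*r),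
                        |g z - ⨍ w in ball x₀ ((4:ℝ)^(k+2)*r), g w|))) := by
                refine tsum_congr fun m => ?_
                rw [hsplit m]
                ring
            _ = T + ENNReal.ofReal ((4:ℝ)^n) * ∑' m : ℕ, (((16:ℝ≥0∞)⁻¹)^m *
                    ∑ k ∈ Finset.range (m+1),
                      ENNReal.ofReal (⨍ z in ball x₀ ((4:ℝ)^(k+2)*r),
                        |g z - ⨍ w in ball x₀ ((4:ℝ)^(k+2)*r), g w|)) := by
                rw [ENNReal.tsum_add, ENNReal.tsum_mul_left, hT]
            _ ≤ T + ENNReal.ofReal ((4:ℝ)^n) * (2 * T) := by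
                gcongr
                exact aux_swap _
            _ = (1 + 2*ENNReal.ofReal ((4:ℝ)^n)) * T := by ring
  refine hmain.trans ?_
  rw [hT16] at *
  -- collapse all ofReal factors
  have hSnn : 0 ≤ ∑' m : ℕ, (4:ℝ)^(-(2:ℝ)*((m:ℝ)+1)) *
      ⨍ z in ball x₀ ((4:ℝ)^(m+2)*r), |g z - ⨍ w in ball x₀ ((4:ℝ)^(m+2)*r), g w| :=
    tsum_nonneg fun m => mul_nonneg (Real.rpow_nonneg (by norm_num) _) (hEnn (m+2))
  have h2 : (1 : ℝ≥0∞) + 2*ENNReal.ofReal ((4:ℝ)^n) = ENNReal.ofReal (1 + 2*4^n) := by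
    rw [ENNReal.ofReal_add (by norm_num) (by positivity), ENNReal.ofReal_one,
      ENNReal.ofReal_mul (by norm_num), ENNReal.ofReal_ofNat]
  have h16 : (16 : ℝ≥0∞) = ENNReal.ofReal 16 := by
    rw [ENNReal.ofReal_ofNat]
  rw [h2, h16, hK]
  rw [← ENNReal.ofReal_mul (by positivity), ← ENNReal.ofReal_mul (by positivity),
    ← ENNReal.ofReal_mul (by positivity)]
  refine ENNReal.ofReal_le_ofReal (le_of_eq ?_)
  ring
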